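/- Let U = diag(2,−2) and V = (1/6)·[[0, i], [−i, 0]] be 2×2 complex matrices. Then for every k ≥ 0 the matrices R_k satisfy the recursion R_{k+1}·U − U·R_{k+1} = (k·I + V)·R_k. -/

import Mathlib

open scoped Matrix

/-- The rational coefficient `a_m = (6m)! / ((6m−1)·(3m)!·(2m)!·1728^m)` (note `a_0 = −1`). -/
noncomputable def aCoeff (m : ℕ) : ℚ :=
  (Nat.factorial (6 * m) : ℚ) /
    (((6 * m : ℚ) - 1) * (Nat.factorial (3 * m)) * (Nat.factorial (2 * m)) * 1728 ^ m)

/-- The matrix coefficients `R_m` of the twisted loop group element attached to the `A₂`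
Frobenius manifold at the point `(u₁,u₂) = (2,−2)`. -/
noncomputable def Rmat (m : ℕ) : Matrix (Fin 2) (Fin 2) ℂ :=
  (aCoeff m : ℂ) •
    !![-1, (-1 : ℂ) ^ m * ((6 * m : ℕ) : ℂ) * Complex.I;
       -(((6 * m : ℕ) : ℂ)) * Complex.I, (-1 : ℂ) ^ (m + 1)]

/-- `U = diag(2,−2)`. -/
noncomputable def Umat : Matrix (Fin 2) (Fin 2) ℂ := !![2, 0; 0, -2]

/-- `V = (1/6)·[[0, i], [−i, 0]]`. -/
noncomputable def Vmat : Matrix (Fin 2) (Fin 2) ℂ :=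
  (6 : ℂ)⁻¹ • !![0, Complex.I; -Complex.I, 0]

/-- The key recursion for the rational coefficients. -/
lemma aCoeff_key (k : ℕ) :
    144 * ((k : ℚ) + 1) * aCoeff (k + 1) = (36 * (k:ℚ)^2 - 1) * aCoeff k := by
  have h6 : 6 * (k + 1) = (6*k + 5) + 1 := by ring
  have h3 : 3 * (k + 1) = (3*k + 2) + 1 := by ring
  have h2 : 2 * (k + 1) = (2*k + 1) + 1 := by ring
  unfold aCoeff
  rw [h6, h3, h2]
  simp only [Nat.factorial_succ]
  push_cast
  have n1 : ((Nat.factorial (6*k)) : ℚ) ≠ 0 := Nat.cast_ne_zero.2 (Nat.factorial_ne_zero _)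
  have n2 : ((Nat.factorial (3*k)) : ℚ) ≠ 0 := Nat.cast_ne_zero.2 (Nat.factorial_ne_zero _)
  have n3 : ((Nat.factorial (2*k)) : ℚ) ≠ 0 := Nat.cast_ne_zero.2 (Nat.factorial_ne_zero _)
  have n4 : (1728 : ℚ) ^ k ≠ 0 := pow_ne_zero _ (by norm_num)
  have n5 : (6 * ((k:ℚ)+1) - 1) ≠ 0 := by
    have : (0:ℚ) ≤ k := Nat.cast_nonneg k
    intro h; linarith
  have n6 : (6 * (k:ℚ) - 1) ≠ 0 := by
    intro h
    have h1 : (6 : ℚ) * k = 1 := by linarith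
    have h2 : ((6 * k : ℕ) : ℚ) = ((1 : ℕ) : ℚ) := by push_cast; linarith
    have h3 : 6 * k = 1 := Nat.cast_injective h2
    omega
  have n7 : (6 * (k:ℚ) + 5) ≠ 0 := by positivity
  rw [show (6 * ((k:ℚ) + 1) - 1) = 6 * (k:ℚ) + 5 by ring, show (36 * (k:ℚ)^2 - 1) = (6 * (k:ℚ) - 1) * (6 * (k:ℚ) + 1) by ring]
  field_simp
  rw [mul_div_cancel_right₀ _ (by rw [mul_comm]; exact n6)]
  ring

/-- The key recursion, cast to `ℂ`. -/
lemma aCoeff_keyC (k : ℕ) :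
    144 * ((k : ℂ) + 1) * (aCoeff (k + 1) : ℂ) = (36 * (k:ℂ)^2 - 1) * (aCoeff k : ℂ) := by
  exact_mod_cast congrArg (Rat.cast : ℚ → ℂ) (aCoeff_key k)

/-- The recursion `[R_{k+1}, U] = (k·I + V)·R_k` defining the twisted loop group element of the
`A₂` Frobenius manifold at `(u₁,u₂) = (2,−2)`. -/
theorem A2_recursion (k : ℕ) :
    Rmat (k + 1) * Umat - Umat * Rmat (k + 1) =
      ((k : ℂ) • (1 : Matrix (Fin 2) (Fin 2) ℂ) + Vmat) * Rmat k := by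
  have hb := aCoeff_keyC k
  have hI : Complex.I ^ 2 = -1 := Complex.I_sq
  ext i j
  fin_cases i <;> fin_cases j <;>
    simp [Rmat, Umat, Vmat, Matrix.mul_apply, Fin.sum_univ_two, Matrix.smul_apply,
      Matrix.one_apply, pow_succ]
  · linear_combination ((k : ℂ) * (aCoeff k : ℂ)) * hI
  · linear_combination ((-1 : ℂ)^k * Complex.I / 6) * hb
  · linear_combination (-Complex.I / 6) * hb
  · linear_combination ((k : ℂ) * (aCoeff k : ℂ) * (-1 : ℂ)^k) * hI
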